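/- (Pre-treatment nullity of the aggregated staggered DiD parameter.) Suppose that for every g ∈ 𝒢, no anticipation holds throughout the pre-treatment period, E[Y(g+e, g) − Y(g+e, ∞) | G = g] = 0 for all event times e ≤ 0, and groupwise parallel trends holds, E[Y(g+e, ∞) − Y(g, ∞) | G = g] = E[Y(g+e, ∞) − Y(g, ∞) | G = ∞] for all e. Then β_g(e) = 0 for every g ∈ 𝒢 and every e ≤ 0 in the common observation window, and consequently the aggregated parameter β_A(e) = Σ_{g∈𝒢} w_g · β_g(e) equals 0 for all e ≤ 0, for any nonnegative weights w_g with Σ_{g∈𝒢} w_g = 1. -/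
import Mathlib


open MeasureTheory ProbabilityTheory

/-- Pre-treatment nullity of the aggregated staggered DiD parameter:
under groupwise no anticipation throughout the pre-treatment period and groupwise
parallel trends, `β_g(e) = 0` for every group `g` and every event time `e ≤ 0`, and
consequently any convex aggregation `β_A(e) = ∑_g w_g β_g(e)` vanishes for `e ≤ 0`. -/
theorem staggered_did_pretreatment_nullity
    {Ω γ : Type*} [MeasurableSpace Ω] [MeasurableSpace γ] [MeasurableSingletonClass γ]
    (P : Measure Ω) [IsProbabilityMeasure P]
    (G : Ω → γ) (hG : Measurable G)
    (Gs : Finset γ) (inf : γ) (hinf : inf ∉ Gs)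
    (hPg : ∀ g ∈ Gs, 0 < P {ω | G ω = g}) (hPinf : 0 < P {ω | G ω = inf})
    (period : γ → ℝ)
    (Ypot : ℝ → γ → Ω → ℝ)
    (hint : ∀ (s : ℝ) (k : γ), ∀ g ∈ Gs,
      Integrable (Ypot s k) (P[|{ω | G ω = g}])
        ∧ Integrable (Ypot s k) (P[|{ω | G ω = inf}]))
    (Yobs : ℝ → Ω → ℝ) (hYobs : ∀ s ω, Yobs s ω = Ypot s (G ω) ω)
    -- group-specific DiD parameter
    (β : γ → ℝ → ℝ)
    (hβ : ∀ g e, β g e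
      = (∫ ω, (Yobs (period g + e) ω - Yobs (period g) ω) ∂(P[|{ω | G ω = g}]))
        - ∫ ω, (Yobs (period g + e) ω - Yobs (period g) ω) ∂(P[|{ω | G ω = inf}]))
    -- groupwise no anticipation throughout the pre-treatment period
    (hNA : ∀ g ∈ Gs, ∀ e : ℝ, e ≤ 0 →
      (∫ ω, (Ypot (period g + e) g ω - Ypot (period g + e) inf ω)
        ∂(P[|{ω | G ω = g}])) = 0)
    -- groupwise parallel trends (for all event times)
    (hPT : ∀ g ∈ Gs, ∀ e : ℝ,
      (∫ ω, (Ypot (period g + e) inf ω - Ypot (period g) inf ω) ∂(P[|{ω | G ω = g}]))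
        = ∫ ω, (Ypot (period g + e) inf ω - Ypot (period g) inf ω)
            ∂(P[|{ω | G ω = inf}])) :
    (∀ g ∈ Gs, ∀ e : ℝ, e ≤ 0 → β g e = 0) ∧
      ∀ w : γ → ℝ, (∀ g ∈ Gs, 0 ≤ w g) → (∑ g ∈ Gs, w g) = 1 →
        ∀ e : ℝ, e ≤ 0 → (∑ g ∈ Gs, w g * β g e) = 0 := by
  have key : ∀ g ∈ Gs, ∀ e : ℝ, e ≤ 0 → β g e = 0 := by
    intro g hg e he
    set sg : Set Ω := {ω | G ω = g} with hsg
    set si : Set Ω := {ω | G ω = inf} with hsi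
    have hmg : MeasurableSet sg := hG (measurableSet_singleton g)
    have hmi : MeasurableSet si := hG (measurableSet_singleton inf)
    -- a.e. membership under conditional measures
    have haeg : ∀ᵐ ω ∂(P[|sg]), G ω = g := by
      have h1 : ∀ᵐ ω ∂(P.restrict sg), G ω = g := ae_restrict_mem hmg
      exact (Measure.absolutelyContinuous_of_le_smul (c := (P sg)⁻¹) le_rfl).ae_le h1
    have haei : ∀ᵐ ω ∂(P[|si]), G ω = inf := by
      have h1 : ∀ᵐ ω ∂(P.restrict si), G ω = inf := ae_restrict_mem hmi
      exact (Measure.absolutelyContinuous_of_le_smul (c := (P si)⁻¹) le_rfl).ae_le h1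
    -- rewrite observed outcomes as potential outcomes a.e.
    have hcg : ∀ s : ℝ,
        (∫ ω, Yobs s ω ∂(P[|sg])) = ∫ ω, Ypot s g ω ∂(P[|sg]) := by
      intro s
      refine integral_congr_ae (haeg.mono fun ω hω => ?_)
      rw [hYobs, hω]
    have hci : ∀ s : ℝ,
        (∫ ω, Yobs s ω ∂(P[|si])) = ∫ ω, Ypot s inf ω ∂(P[|si]) := by
      intro s
      refine integral_congr_ae (haei.mono fun ω hω => ?_)
      rw [hYobs, hω]
    have hIg : ∀ (s : ℝ) (k : γ), Integrable (Ypot s k) (P[|sg]) :=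
      fun s k => (hint s k g hg).1
    have hIi : ∀ (s : ℝ) (k : γ), Integrable (Ypot s k) (P[|si]) :=
      fun s k => (hint s k g hg).2
    have hIog : ∀ s : ℝ, Integrable (Yobs s) (P[|sg]) := by
      intro s
      refine (hIg s g).congr (haeg.mono fun ω hω => ?_)
      rw [hYobs, hω]
    have hIoi : ∀ s : ℝ, Integrable (Yobs s) (P[|si]) := by
      intro s
      refine (hIi s inf).congr (haei.mono fun ω hω => ?_)
      rw [hYobs, hω]
    -- from no anticipation at event time e and 0
    have hNAe : (∫ ω, Ypot (period g + e) g ω ∂(P[|sg]))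
        = ∫ ω, Ypot (period g + e) inf ω ∂(P[|sg]) := by
      have := hNA g hg e he
      rwa [integral_sub (hIg _ g) (hIg _ inf), sub_eq_zero] at this
    have hNA0 : (∫ ω, Ypot (period g) g ω ∂(P[|sg]))
        = ∫ ω, Ypot (period g) inf ω ∂(P[|sg]) := by
      have := hNA g hg 0 le_rfl
      rw [add_zero] at this
      rwa [integral_sub (hIg _ g) (hIg _ inf), sub_eq_zero] at this
    have hPT' : (∫ ω, Ypot (period g + e) inf ω ∂(P[|sg]))
          - (∫ ω, Ypot (period g) inf ω ∂(P[|sg]))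
        = (∫ ω, Ypot (period g + e) inf ω ∂(P[|si]))
          - (∫ ω, Ypot (period g) inf ω ∂(P[|si])) := by
      have := hPT g hg e
      rwa [integral_sub (hIg _ inf) (hIg _ inf),
        integral_sub (hIi _ inf) (hIi _ inf)] at this
    rw [hβ, integral_sub (hIog _) (hIog _), integral_sub (hIoi _) (hIoi _),
      hcg, hcg, hci, hci, hNAe, hNA0]
    rw [hPT']
    ring
  refine ⟨key, fun w _ _ e he => ?_⟩
  refine Finset.sum_eq_zero fun g hg => ?_
  rw [key g hg e he, mul_zero]
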